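/- Let N ∈ ℕ, let Ĝ ∈ ℝ^{N×N} be symmetric positive semi-definite, ĝ ∈ ℝ^N, λ > 0, and let β ∈ ℝ^N satisfy |Ĝβ − ĝ|_∞ ≤ λ/4. Let β̂ be any global minimizer over m ∈ ℝ^N of m^⊤Ĝm − 2m^⊤ĝ + λ|m|_1. Set v := β̂ − β, S := {i : β_i ≠ 0}, and let v_S (resp. v_{S^c}) agree with v on S (resp. on the complement of S) and vanish elsewhere. Then v^⊤ Ĝ v ≤ (λ/2)(3|v_S|_1 − |v_{S^c}|_1); in particular |v_{S^c}|_1 ≤ 3|v_S|_1 and |v|_1 ≤ 4√(|S|) |v|_2. -/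

import Mathlib

open Matrix
open scoped Classical

theorem stmt6 (N : ℕ) (Ghat : Matrix (Fin N) (Fin N) ℝ) (hGhat : Ghat.PosSemidef)
    (ghat : Fin N → ℝ) (lam : ℝ) (hlam : 0 < lam) (β βhat : Fin N → ℝ)
    (hdev : ∀ i, |Ghat.mulVec β i - ghat i| ≤ lam / 4)
    (hmin : ∀ m : Fin N → ℝ,
      βhat ⬝ᵥ Ghat.mulVec βhat - 2 * (βhat ⬝ᵥ ghat) + lam * ∑ i, |βhat i| ≤
        m ⬝ᵥ Ghat.mulVec m - 2 * (m ⬝ᵥ ghat) + lam * ∑ i, |m i|) :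
    (βhat - β) ⬝ᵥ Ghat.mulVec (βhat - β) ≤
      lam / 2 * (3 * (∑ i ∈ Finset.univ.filter (fun i => β i ≠ 0), |(βhat - β) i|) -
        ∑ i ∈ (Finset.univ.filter (fun i => β i ≠ 0))ᶜ, |(βhat - β) i|) ∧
    (∑ i ∈ (Finset.univ.filter (fun i => β i ≠ 0))ᶜ, |(βhat - β) i|) ≤
      3 * ∑ i ∈ Finset.univ.filter (fun i => β i ≠ 0), |(βhat - β) i| ∧
    (∑ i, |(βhat - β) i|) ≤
      4 * Real.sqrt ((Finset.univ.filter (fun i => β i ≠ 0)).card) *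
        Real.sqrt (∑ i, ((βhat - β) i) ^ 2) := by
  set v : Fin N → ℝ := βhat - β with hv
  set S : Finset (Fin N) := Finset.univ.filter (fun i => β i ≠ 0) with hS
  -- symmetry
  have hsym : β ⬝ᵥ Ghat.mulVec βhat = βhat ⬝ᵥ Ghat.mulVec β := by
    have ht : Ghatᵀ = Ghat := by
      have := hGhat.1
      simpa [Matrix.IsHermitian, Matrix.conjTranspose_eq_transpose_of_trivial] using this
    rw [Matrix.dotProduct_mulVec, ← Matrix.mulVec_transpose, ht,
      dotProduct_comm]
  -- expansion of quadratic form
  have hexp : v ⬝ᵥ Ghat.mulVec v =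
      βhat ⬝ᵥ Ghat.mulVec βhat - 2 * (βhat ⬝ᵥ Ghat.mulVec β) + β ⬝ᵥ Ghat.mulVec β := by
    rw [hv]
    simp only [Matrix.mulVec_sub, dotProduct_sub, sub_dotProduct]
    linarith [hsym]
  have hvg : v ⬝ᵥ ghat = βhat ⬝ᵥ ghat - β ⬝ᵥ ghat := by
    rw [hv]; simp [sub_dotProduct]
  have hvGb : v ⬝ᵥ Ghat.mulVec β = βhat ⬝ᵥ Ghat.mulVec β - β ⬝ᵥ Ghat.mulVec β := by
    rw [hv]; simp [sub_dotProduct]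
  have hbasic : v ⬝ᵥ Ghat.mulVec v ≤
      2 * (v ⬝ᵥ (ghat - Ghat.mulVec β)) + lam * ((∑ i, |β i|) - ∑ i, |βhat i|) := by
    have h := hmin β
    have : v ⬝ᵥ (ghat - Ghat.mulVec β) = v ⬝ᵥ ghat - v ⬝ᵥ Ghat.mulVec β := by
      simp [dotProduct_sub]
    rw [hexp, this, hvg, hvGb]
    linarith [h]
  -- bound the cross term
  have hcross : v ⬝ᵥ (ghat - Ghat.mulVec β) ≤ (lam / 4) * ∑ i, |v i| := by
    rw [Finset.mul_sum]
    refine Finset.sum_le_sum fun i _ => ?_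
    calc v i * (ghat - Ghat.mulVec β) i ≤ |v i * (ghat - Ghat.mulVec β) i| := le_abs_self _
      _ = |v i| * |(ghat - Ghat.mulVec β) i| := abs_mul _ _
      _ ≤ |v i| * (lam / 4) := by
          refine mul_le_mul_of_nonneg_left ?_ (abs_nonneg _)
          have := hdev i
          rw [abs_sub_comm] at this
          simpa using this
      _ = lam / 4 * |v i| := mul_comm _ _
  -- bound the l1 difference
  have hl1 : (∑ i, |β i|) - (∑ i, |βhat i|) ≤
      (∑ i ∈ S, |v i|) - ∑ i ∈ Sᶜ, |v i| := by
    have hsplit : ∀ f : Fin N → ℝ, (∑ i, f i) = (∑ i ∈ S, f i) + ∑ i ∈ Sᶜ, f i :=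
      fun f => (Finset.sum_add_sum_compl S f).symm
    rw [hsplit (fun i => |β i|), hsplit (fun i => |βhat i|)]
    have h1 : (∑ i ∈ S, |β i|) - (∑ i ∈ S, |βhat i|) ≤ ∑ i ∈ S, |v i| := by
      rw [← Finset.sum_sub_distrib]
      refine Finset.sum_le_sum fun i _ => ?_
      have : |β i| - |βhat i| ≤ |β i - βhat i| := abs_sub_abs_le_abs_sub _ _
      have hvi : |v i| = |β i - βhat i| := by rw [hv]; simp [abs_sub_comm]
      linarith
    have h2 : ∀ i ∈ Sᶜ, |β i| - |βhat i| = -|v i| := by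
      intro i hi
      have : β i = 0 := by
        simp only [hS, Finset.mem_compl, Finset.mem_filter, Finset.mem_univ, true_and,
          not_not] at hi
        exact hi
      rw [hv]; simp [this]
    have h2' : (∑ i ∈ Sᶜ, |β i|) - (∑ i ∈ Sᶜ, |βhat i|) = -∑ i ∈ Sᶜ, |v i| := by
      rw [← Finset.sum_sub_distrib, ← Finset.sum_neg_distrib]
      exact Finset.sum_congr rfl h2
    linarith
  have hsum : (∑ i, |v i|) = (∑ i ∈ S, |v i|) + ∑ i ∈ Sᶜ, |v i| :=
    (Finset.sum_add_sum_compl S _).symm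
  have main : v ⬝ᵥ Ghat.mulVec v ≤
      lam / 2 * (3 * (∑ i ∈ S, |v i|) - ∑ i ∈ Sᶜ, |v i|) := by
    have := hbasic
    nlinarith [hcross, hl1, hsum]
  have hpos : 0 ≤ v ⬝ᵥ Ghat.mulVec v := by
    have := hGhat.dotProduct_mulVec_nonneg v
    simpa using this
  have cone : (∑ i ∈ Sᶜ, |v i|) ≤ 3 * ∑ i ∈ S, |v i| := by
    nlinarith [main, hpos]
  refine ⟨main, cone, ?_⟩
  -- Cauchy-Schwarz part
  have hcs : (∑ i ∈ S, |v i|) ≤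
      Real.sqrt (S.card) * Real.sqrt (∑ i ∈ S, (v i) ^ 2) := by
    have := Real.sum_mul_le_sqrt_mul_sqrt S (fun _ => (1 : ℝ)) (fun i => |v i|)
    simpa [sq_abs] using this
  have hmono : Real.sqrt (∑ i ∈ S, (v i) ^ 2) ≤ Real.sqrt (∑ i, (v i) ^ 2) := by
    apply Real.sqrt_le_sqrt
    exact Finset.sum_le_sum_of_subset_of_nonneg (Finset.subset_univ S)
      (fun i _ _ => sq_nonneg _)
  have hcard : (0 : ℝ) ≤ Real.sqrt (S.card) := Real.sqrt_nonneg _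
  have hS1 : (∑ i ∈ S, |v i|) ≤ Real.sqrt (S.card) * Real.sqrt (∑ i, (v i) ^ 2) :=
    hcs.trans (mul_le_mul_of_nonneg_left hmono hcard)
  calc (∑ i, |v i|) = (∑ i ∈ S, |v i|) + ∑ i ∈ Sᶜ, |v i| := hsum
    _ ≤ 4 * ∑ i ∈ S, |v i| := by linarith [cone]
    _ ≤ 4 * (Real.sqrt (S.card) * Real.sqrt (∑ i, (v i) ^ 2)) := by linarith [hS1]
    _ = 4 * Real.sqrt (S.card) * Real.sqrt (∑ i, (v i) ^ 2) := by ring
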